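/- Let A ∈ ℝ and set A_η(t) = A_α(t) = A/(2(1 + 2 e^{At})). Then u(η,α,t) = e^{At}(log(tanh(η/2)) + α + 2) solves ∂_t u - A_η(t) · sinh η ∂_η(u²) - A_α(t) · ∂_α(u²) = Δ_H u + (A_η(t) + A_α(t)) u, where Δ_H = (1/sinh η) ∂_η(sinh η ∂_η) + (1/sinh²η) ∂_αα is the hyperbolic Laplacian in geodesic polar coordinates, on (0,∞) × ℝ × ℝ. -/

import Mathlib

open Real Filter

lemma hasDerivAt_log_tanh_half {y : ℝ} (hy : 0 < y) :
    HasDerivAt (fun w : ℝ => Real.log (Real.tanh (w / 2))) (1 / Real.sinh y) y := by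
  have hs : (0:ℝ) < Real.sinh (y / 2) := Real.sinh_pos_iff.2 (by linarith)
  have hc : (0:ℝ) < Real.cosh (y / 2) := Real.cosh_pos _
  have hhalf : HasDerivAt (fun w : ℝ => w / 2) (1 / 2) y := by
    simpa using (hasDerivAt_id y).div_const 2
  have h1 : HasDerivAt (fun w : ℝ => Real.log (Real.sinh (w / 2)))
      (Real.cosh (y / 2) * (1 / 2) / Real.sinh (y / 2)) y :=
    by have hc' := (Real.hasDerivAt_sinh (y / 2)).comp y hhalf; exact HasDerivAt.log (f := fun w : ℝ => Real.sinh (w / 2)) hc' hs.ne'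
  have h2 : HasDerivAt (fun w : ℝ => Real.log (Real.cosh (w / 2)))
      (Real.sinh (y / 2) * (1 / 2) / Real.cosh (y / 2)) y :=
    by have hc' := (Real.hasDerivAt_cosh (y / 2)).comp y hhalf; exact HasDerivAt.log (f := fun w : ℝ => Real.cosh (w / 2)) hc' hc.ne'
  have h := h1.sub h2
  have heq : (fun w : ℝ => Real.log (Real.sinh (w / 2)) - Real.log (Real.cosh (w / 2)))
      =ᶠ[nhds y] fun w : ℝ => Real.log (Real.tanh (w / 2)) := by
    filter_upwards [isOpen_Ioi.mem_nhds hy] with x hx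
    have hs' : (0:ℝ) < Real.sinh (x / 2) :=
      Real.sinh_pos_iff.2 (by simpa using half_pos (Set.mem_Ioi.1 hx))
    rw [Real.tanh_eq_sinh_div_cosh, Real.log_div hs'.ne' (Real.cosh_pos _).ne']
  have hval : Real.cosh (y / 2) * (1 / 2) / Real.sinh (y / 2)
      - Real.sinh (y / 2) * (1 / 2) / Real.cosh (y / 2) = 1 / Real.sinh y := by
    have hsy : Real.sinh y = 2 * Real.sinh (y / 2) * Real.cosh (y / 2) := by
      rw [← Real.sinh_two_mul]; ring_nf
    have hid : Real.cosh (y / 2) ^ 2 - Real.sinh (y / 2) ^ 2 = 1 :=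
      Real.cosh_sq_sub_sinh_sq (y / 2)
    rw [hsy]
    field_simp
    linear_combination hid
  exact hval ▸ h.congr_of_eventuallyEq heq.symm

theorem hyperbolic_2d_burgers (A : ℝ) (Aη Aα : ℝ → ℝ)
    (hAη : ∀ t, Aη t = A / (2 * (1 + 2 * Real.exp (A * t))))
    (hAα : ∀ t, Aα t = A / (2 * (1 + 2 * Real.exp (A * t))))
    (u : ℝ → ℝ → ℝ → ℝ)
    (hu : ∀ η α t, u η α t
      = Real.exp (A * t) * (Real.log (Real.tanh (η / 2)) + α + 2)) :
    ∀ η : ℝ, 0 < η → ∀ α t : ℝ,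
      deriv (fun s : ℝ => u η α s) t
          - Aη t * (Real.sinh η * deriv (fun y : ℝ => (u y α t) ^ 2) η)
          - Aα t * deriv (fun z : ℝ => (u η z t) ^ 2) α
        = ((1 / Real.sinh η) *
              deriv (fun y : ℝ => Real.sinh y * deriv (fun w : ℝ => u w α t) y) η
            + (1 / Real.sinh η ^ 2) *
              deriv (fun z : ℝ => deriv (fun w : ℝ => u η w t) z) α)
          + (Aη t + Aα t) * u η α t := by
  intro η hη α t
  set E := Real.exp (A * t) with hE
  have hEpos : 0 < E := Real.exp_pos _
  have hS : 0 < Real.sinh η := Real.sinh_pos_iff.2 hη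
  -- derivative of u in η direction, at any y > 0
  have hdη : ∀ y : ℝ, 0 < y →
      HasDerivAt (fun w : ℝ => u w α t) (E / Real.sinh y) y := by
    intro y hy
    have : HasDerivAt (fun w : ℝ => E * (Real.log (Real.tanh (w / 2)) + α + 2))
        (E * (1 / Real.sinh y)) y :=
      (((hasDerivAt_log_tanh_half hy).add_const α).add_const 2).const_mul E
    have heq : (fun w : ℝ => u w α t)
        = fun w : ℝ => E * (Real.log (Real.tanh (w / 2)) + α + 2) := by
      funext w; rw [hu]
    rw [heq]
    simpa [div_eq_mul_inv] using this
  -- time derivative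
  have hdt : deriv (fun s : ℝ => u η α s) t = A * u η α t := by
    have : HasDerivAt (fun s : ℝ => Real.exp (A * s)
        * (Real.log (Real.tanh (η / 2)) + α + 2))
        (Real.exp (A * t) * (A * 1) * (Real.log (Real.tanh (η / 2)) + α + 2)) t :=
      (((hasDerivAt_id t).const_mul A).exp).mul_const _
    have heq : (fun s : ℝ => u η α s)
        = fun s : ℝ => Real.exp (A * s) * (Real.log (Real.tanh (η / 2)) + α + 2) := by
      funext s; rw [hu]
    rw [heq, this.deriv, hu]; ring
  -- η derivative of u^2
  have hdη2 : deriv (fun y : ℝ => (u y α t) ^ 2) η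
      = 2 * u η α t * (E / Real.sinh η) := by
    have := ((hdη η hη).pow 2).deriv
    change deriv (fun y : ℝ => (u y α t) ^ 2) η = _ at this
    simpa using this
  -- α derivative of u (at any point z)
  have hdα : ∀ z : ℝ, HasDerivAt (fun w : ℝ => u η w t) E z := by
    intro z
    have : HasDerivAt (fun w : ℝ => E * (Real.log (Real.tanh (η / 2)) + w + 2))
        (E * 1) z := by
      exact (((hasDerivAt_id z).const_add _).add_const 2).const_mul E
    have heq : (fun w : ℝ => u η w t)
        = fun w : ℝ => E * (Real.log (Real.tanh (η / 2)) + w + 2) := by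
      funext w; rw [hu]
    rw [heq]; simpa using this
  -- α derivative of u^2
  have hdα2 : deriv (fun z : ℝ => (u η z t) ^ 2) α = 2 * u η α t * E := by
    have := (((hdα α).pow 2)).deriv
    change deriv (fun z : ℝ => (u η z t) ^ 2) α = _ at this
    simpa using this
  -- second α derivative is zero
  have hdαα : deriv (fun z : ℝ => deriv (fun w : ℝ => u η w t) z) α = 0 := by
    have heq : (fun z : ℝ => deriv (fun w : ℝ => u η w t) z) = fun _ : ℝ => E := by
      funext z; exact (hdα z).deriv
    rw [heq, deriv_const]
  -- the η Laplacian term is zero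
  have hdηη : deriv (fun y : ℝ => Real.sinh y * deriv (fun w : ℝ => u w α t) y) η = 0 := by
    have heq : (fun y : ℝ => Real.sinh y * deriv (fun w : ℝ => u w α t) y)
        =ᶠ[nhds η] fun _ : ℝ => E := by
      filter_upwards [isOpen_Ioi.mem_nhds hη] with y hy
      have hSy : Real.sinh y ≠ 0 := (Real.sinh_pos_iff.2 (Set.mem_Ioi.1 hy)).ne'
      rw [(hdη y (Set.mem_Ioi.1 hy)).deriv]
      field_simp
    rw [heq.deriv_eq, deriv_const]
  rw [hdt, hdη2, hdα2, hdαα, hdηη, hAη, hAα, hu]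
  have h1 : (1 : ℝ) + 2 * E ≠ 0 := by positivity
  field_simp
  ring
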